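/- On the unit disk (radius ε) with euclidean metric, trivial line bundle, trivial metric and framing, the boundary (Dirichlet-to-Neumann type) operator 𝒜_{B_ε} for the Alvarez boundary value problem acts on Fourier modes by 𝒜_{B_ε}(f,g)(θ) = Σ_{n≠0} M_n (f̂(n), ĝ(n))ᵀ e^{inθ}, where M_n is the 2×2 matrix with entries M_n = [[0, −i σ(n)], [i σ(n), −ε/|n|]] and σ(n) is the sign of n. -/

import Mathlib

open Complex MeasureTheory intervalIntegral Metric Set

noncomputable def AlvE (θ : ℝ) : ℂ := Complex.exp ((θ : ℂ) * Complex.I)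
noncomputable def AlvK (n : ℤ) (θ : ℝ) : ℂ := Complex.exp (-(n : ℂ) * (θ : ℂ) * Complex.I)
noncomputable def AlvC (ε : ℝ) (H : ℂ → ℂ) (n : ℤ) : ℂ :=
  ∫ θ in (0:ℝ)..(2 * Real.pi), H ((ε : ℂ) * AlvE θ) * AlvK n θ

lemma AlvE_abs (θ : ℝ) : ‖AlvE θ‖ = 1 := by
  simp [AlvE, Complex.norm_exp]

lemma AlvE_mem {ε ε' : ℝ} (hε : 0 ≤ ε) (hεε' : ε < ε') (θ : ℝ) :
    (ε : ℂ) * AlvE θ ∈ ball (0:ℂ) ε' := by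
  simp only [mem_ball, dist_zero_right, norm_mul, AlvE_abs,
    Complex.norm_real, Real.norm_eq_abs, mul_one, _root_.abs_of_nonneg hε]
  exact hεε'

lemma AlvE_continuous : Continuous AlvE := by
  unfold AlvE; fun_prop

lemma AlvK_continuous (n : ℤ) : Continuous (AlvK n) := by
  unfold AlvK; fun_prop

lemma Alv_cont {ε ε' : ℝ} (hε : 0 ≤ ε) (hεε' : ε < ε') {H : ℂ → ℂ}
    (hH : AnalyticOnNhd ℂ H (ball 0 ε')) :
    Continuous fun θ : ℝ => H ((ε : ℂ) * AlvE θ) := by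
  apply continuous_iff_continuousAt.2
  intro θ
  exact ((hH _ (AlvE_mem hε hεε' θ)).differentiableAt.continuousAt).comp
    (x := θ) (by exact (continuous_const.mul AlvE_continuous).continuousAt)

lemma Alv_intble {ε ε' : ℝ} (hε : 0 ≤ ε) (hεε' : ε < ε') {H : ℂ → ℂ}
    (hH : AnalyticOnNhd ℂ H (ball 0 ε')) (n : ℤ) (a b : ℝ) :
    IntervalIntegrable (fun θ => H ((ε : ℂ) * AlvE θ) * AlvK n θ) volume a b :=
  ((Alv_cont hε hεε' hH).mul (AlvK_continuous n)).intervalIntegrable a b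

lemma Alv_integral_conj (h : ℝ → ℂ) (a b : ℝ) :
    (∫ θ in a..b, (starRingEnd ℂ) (h θ)) = (starRingEnd ℂ) (∫ θ in a..b, h θ) := by
  simp only [intervalIntegral, map_sub, integral_conj]

lemma AlvK_conj (n : ℤ) (θ : ℝ) :
    (starRingEnd ℂ) (AlvK n θ) = AlvK (-n) θ := by
  unfold AlvK
  rw [← Complex.exp_conj]
  congr 1
  simp [map_mul]

lemma Alv_conj_integral (H : ℝ → ℂ) (n : ℤ) :
    (∫ θ in (0:ℝ)..(2 * Real.pi), (starRingEnd ℂ) (H θ) * AlvK n θ)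
      = (starRingEnd ℂ) (∫ θ in (0:ℝ)..(2 * Real.pi), H θ * AlvK (-n) θ) := by
  rw [← Alv_integral_conj]
  apply intervalIntegral.integral_congr
  intro θ _
  simp only [map_mul, AlvK_conj, neg_neg]

lemma AlvC_zero {ε ε' : ℝ} (hε : 0 < ε) (hεε' : ε < ε') {H : ℂ → ℂ}
    (hH : AnalyticOnNhd ℂ H (ball 0 ε')) {n : ℤ} (hn : n < 0) :
    AlvC ε H n = 0 := by
  set k : ℕ := (-n - 1).toNat with hk
  have hkn : (k : ℤ) = -n - 1 := Int.toNat_of_nonneg (by omega)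
  have hkc : -(n : ℂ) = ((k : ℕ) : ℂ) + 1 := by
    have : ((k : ℤ) : ℂ) = ((-n - 1 : ℤ) : ℂ) := by rw [hkn]
    push_cast at this ⊢
    rw [this]; ring
  have hsub : closedBall (0:ℂ) ε ⊆ ball 0 ε' := closedBall_subset_ball hεε'
  have hdiff : ∀ z ∈ closedBall (0:ℂ) ε, DifferentiableAt ℂ (fun w => H w * w ^ k) z :=
    fun z hz => ((hH z (hsub hz)).differentiableAt).mul (differentiableAt_pow k)
  have hcirc : (∮ z in C(0, ε), H z * z ^ k) = 0 := by
    apply circleIntegral_eq_zero_of_differentiable_on_off_countable hε.le Set.countable_empty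
    · exact fun z hz => (hdiff z hz).continuousAt.continuousWithinAt
    · exact fun z hz => hdiff z (Metric.ball_subset_closedBall hz.1)
  have hmap : ∀ θ : ℝ, circleMap 0 ε θ = (ε : ℂ) * AlvE θ := fun θ => by
    simp [circleMap, AlvE]
  have heq : ∀ θ ∈ uIcc (0:ℝ) (2 * Real.pi),
      deriv (circleMap 0 ε) θ • (H (circleMap 0 ε θ) * circleMap 0 ε θ ^ k)
        = (Complex.I * (ε : ℂ) ^ (k + 1)) * (H ((ε : ℂ) * AlvE θ) * AlvK n θ) := by
    intro θ _
    rw [deriv_circleMap, hmap θ, smul_eq_mul]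
    have hE : AlvK n θ = AlvE θ ^ (k + 1) := by
      unfold AlvK AlvE
      rw [← Complex.exp_nat_mul]
      congr 1
      rw [show -(n : ℂ) * (θ:ℂ) * Complex.I = (-(n:ℂ)) * ((θ:ℂ) * Complex.I) by ring, hkc]
      push_cast
      ring
    rw [hE]
    ring
  rw [circleIntegral, intervalIntegral.integral_congr heq,
    intervalIntegral.integral_const_mul] at hcirc
  have hne : Complex.I * (ε : ℂ) ^ (k + 1) ≠ 0 := by
    apply mul_ne_zero Complex.I_ne_zero
    exact pow_ne_zero _ (by exact_mod_cast hε.ne')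
  exact (mul_eq_zero.mp hcirc).resolve_left hne

lemma hasDerivAt_AlvE (θ : ℝ) : HasDerivAt AlvE (Complex.I * AlvE θ) θ := by
  have h1 : HasDerivAt (fun t : ℝ => (t : ℂ)) 1 θ := by
    exact Complex.ofRealCLM.hasDerivAt (x := θ)
  have h2 := (h1.mul_const Complex.I).cexp
  unfold AlvE
  convert h2 using 1
  ring

lemma hasDerivAt_AlvK (n : ℤ) (θ : ℝ) :
    HasDerivAt (AlvK n) (-(n : ℂ) * Complex.I * AlvK n θ) θ := by
  have h1 : HasDerivAt (fun t : ℝ => (t : ℂ)) 1 θ := by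
    exact Complex.ofRealCLM.hasDerivAt (x := θ)
  have h2 := (((h1.const_mul (-(n:ℂ))).mul_const Complex.I)).cexp
  have : HasDerivAt (AlvK n) (Complex.exp (-(n:ℂ) * (θ:ℂ) * Complex.I) * (-(n:ℂ) * 1 * Complex.I)) θ := h2
  convert this using 1
  unfold AlvK
  ring

lemma Alv_hasDerivAt_circ {ε : ℝ} {H : ℂ → ℂ} {θ : ℝ}
    (hd : DifferentiableAt ℂ H ((ε : ℂ) * AlvE θ)) :
    HasDerivAt (fun t : ℝ => H ((ε : ℂ) * AlvE t))
      (deriv H ((ε : ℂ) * AlvE θ) * ((ε : ℂ) * Complex.I * AlvE θ)) θ := by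
  have inner : HasDerivAt (fun t : ℝ => (ε : ℂ) * AlvE t) ((ε : ℂ) * (Complex.I * AlvE θ)) θ :=
    (hasDerivAt_AlvE θ).const_mul _
  have h := (hd.hasDerivAt.hasFDerivAt.restrictScalars ℝ).comp_hasDerivAt θ inner
  have h2 : HasDerivAt (fun t : ℝ => H ((ε : ℂ) * AlvE t))
      (((ε : ℂ) * (Complex.I * AlvE θ)) • deriv H ((ε : ℂ) * AlvE θ)) θ := by
    simpa [Function.comp_def] using h
  convert h2 using 1
  simp [smul_eq_mul]
  ring

lemma AlvK_shift (n : ℤ) (θ : ℝ) : AlvE θ * AlvK n θ = AlvK (n - 1) θ := by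
  unfold AlvE AlvK
  rw [← Complex.exp_add]
  congr 1
  push_cast
  ring

lemma AlvC_parts {ε ε' : ℝ} (hε : 0 < ε) (hεε' : ε < ε') {G : ℂ → ℂ}
    (hG : AnalyticOnNhd ℂ G (ball 0 ε')) (n : ℤ) :
    (n : ℂ) * AlvC ε G n = (ε : ℂ) * AlvC ε (deriv G) (n - 1) := by
  set u : ℝ → ℂ := fun θ => G ((ε : ℂ) * AlvE θ) * AlvK n θ with hu
  set u' : ℝ → ℂ := fun θ =>
    deriv G ((ε : ℂ) * AlvE θ) * ((ε : ℂ) * Complex.I * AlvE θ) * AlvK n θ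
      + G ((ε : ℂ) * AlvE θ) * (-(n : ℂ) * Complex.I * AlvK n θ) with hu'
  have hder : ∀ θ ∈ uIcc (0:ℝ) (2 * Real.pi), HasDerivAt u (u' θ) θ := by
    intro θ _
    exact (Alv_hasDerivAt_circ
      (hG _ (AlvE_mem hε.le hεε' θ)).differentiableAt).mul (hasDerivAt_AlvK n θ)
  have hcG : Continuous fun θ : ℝ => G ((ε : ℂ) * AlvE θ) := Alv_cont hε.le hεε' hG
  have hcG' : Continuous fun θ : ℝ => deriv G ((ε : ℂ) * AlvE θ) :=
    Alv_cont hε.le hεε' hG.deriv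
  have hc1 : Continuous fun θ : ℝ =>
      deriv G ((ε : ℂ) * AlvE θ) * ((ε : ℂ) * Complex.I * AlvE θ) * AlvK n θ :=
    (hcG'.mul (continuous_const.mul AlvE_continuous)).mul (AlvK_continuous n)
  have hc2 : Continuous fun θ : ℝ =>
      G ((ε : ℂ) * AlvE θ) * (-(n : ℂ) * Complex.I * AlvK n θ) :=
    hcG.mul (continuous_const.mul (AlvK_continuous n))
  have hint : IntervalIntegrable u' volume 0 (2 * Real.pi) :=
    ((hc1.add hc2)).intervalIntegrable _ _
  have hfund := intervalIntegral.integral_eq_sub_of_hasDerivAt hder hint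
  have hval : u (2 * Real.pi) = u 0 := by
    have hE : AlvE (2 * Real.pi) = 1 := by
      unfold AlvE; push_cast; exact Complex.exp_two_pi_mul_I
    have hK : AlvK n (2 * Real.pi) = 1 := by
      unfold AlvK
      have := Complex.exp_int_mul_two_pi_mul_I (-n)
      rw [← this]; congr 1; push_cast; ring
    have hE0 : AlvE 0 = 1 := by unfold AlvE; simp
    have hK0 : AlvK n 0 = 1 := by unfold AlvK; simp
    simp [hu, hE, hK, hE0, hK0]
  rw [hval, sub_self] at hfund
  have hsplit : (∫ θ in (0:ℝ)..(2 * Real.pi), u' θ)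
      = (∫ θ in (0:ℝ)..(2 * Real.pi),
          deriv G ((ε : ℂ) * AlvE θ) * ((ε : ℂ) * Complex.I * AlvE θ) * AlvK n θ)
        + ∫ θ in (0:ℝ)..(2 * Real.pi),
            G ((ε : ℂ) * AlvE θ) * (-(n : ℂ) * Complex.I * AlvK n θ) := by
    exact intervalIntegral.integral_add (hc1.intervalIntegrable _ _) (hc2.intervalIntegrable _ _)
  have h1 : (∫ θ in (0:ℝ)..(2 * Real.pi),
      deriv G ((ε : ℂ) * AlvE θ) * ((ε : ℂ) * Complex.I * AlvE θ) * AlvK n θ)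
        = ((ε : ℂ) * Complex.I) * AlvC ε (deriv G) (n - 1) := by
    rw [AlvC, ← intervalIntegral.integral_const_mul]
    apply intervalIntegral.integral_congr
    intro θ _
    simp only
    rw [← AlvK_shift n θ]
    ring
  have h2 : (∫ θ in (0:ℝ)..(2 * Real.pi),
      G ((ε : ℂ) * AlvE θ) * (-(n : ℂ) * Complex.I * AlvK n θ))
        = (-(n : ℂ) * Complex.I) * AlvC ε G n := by
    rw [AlvC, ← intervalIntegral.integral_const_mul]
    apply intervalIntegral.integral_congr
    intro θ _
    ring
  rw [hsplit, h1, h2] at hfund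
  have h3 : Complex.I * ((n:ℂ) * AlvC ε G n) = Complex.I * ((ε:ℂ) * AlvC ε (deriv G) (n-1)) := by
    linear_combination -hfund
  exact mul_left_cancel₀ Complex.I_ne_zero h3

lemma Alv_imC (w : ℂ) : ((w.im : ℝ) : ℂ) = (-Complex.I / 2) * (w - (starRingEnd ℂ) w) := by
  rw [Complex.sub_conj]
  push_cast
  ring_nf
  rw [Complex.I_sq]
  ring

lemma Alv_reC (w : ℂ) : ((w.re : ℝ) : ℂ) = (1 / 2) * (w + (starRingEnd ℂ) w) := by
  rw [Complex.add_conj]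
  push_cast
  ring

lemma Alv_master {ε ε' : ℝ} (hε : 0 ≤ ε) (hεε' : ε < ε') {H1 H2 : ℂ → ℂ}
    (h1 : AnalyticOnNhd ℂ H1 (ball 0 ε')) (h2 : AnalyticOnNhd ℂ H2 (ball 0 ε'))
    (α1 β1 α2 β2 : ℂ) (n : ℤ) (w : ℝ → ℂ)
    (hw : ∀ θ : ℝ, w θ = α1 * H1 ((ε:ℂ) * AlvE θ) + β1 * (starRingEnd ℂ) (H1 ((ε:ℂ) * AlvE θ))
      + α2 * H2 ((ε:ℂ) * AlvE θ) + β2 * (starRingEnd ℂ) (H2 ((ε:ℂ) * AlvE θ))) :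
    (∫ θ in (0:ℝ)..(2 * Real.pi), w θ * AlvK n θ)
      = α1 * AlvC ε H1 n + β1 * (starRingEnd ℂ) (AlvC ε H1 (-n))
        + α2 * AlvC ε H2 n + β2 * (starRingEnd ℂ) (AlvC ε H2 (-n)) := by
  have c1 := Alv_cont hε hεε' h1
  have c2 := Alv_cont hε hεε' h2
  have ck := AlvK_continuous n
  set t1 : ℝ → ℂ := fun θ => α1 * (H1 ((ε:ℂ) * AlvE θ) * AlvK n θ) with ht1
  set t2 : ℝ → ℂ := fun θ => β1 * ((starRingEnd ℂ) (H1 ((ε:ℂ) * AlvE θ)) * AlvK n θ) with ht2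
  set t3 : ℝ → ℂ := fun θ => α2 * (H2 ((ε:ℂ) * AlvE θ) * AlvK n θ) with ht3
  set t4 : ℝ → ℂ := fun θ => β2 * ((starRingEnd ℂ) (H2 ((ε:ℂ) * AlvE θ)) * AlvK n θ) with ht4
  have i1 : IntervalIntegrable t1 volume 0 (2 * Real.pi) :=
    (continuous_const.mul (c1.mul ck)).intervalIntegrable _ _
  have i2 : IntervalIntegrable t2 volume 0 (2 * Real.pi) :=
    (continuous_const.mul ((Complex.continuous_conj.comp c1).mul ck)).intervalIntegrable _ _
  have i3 : IntervalIntegrable t3 volume 0 (2 * Real.pi) :=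
    (continuous_const.mul (c2.mul ck)).intervalIntegrable _ _
  have i4 : IntervalIntegrable t4 volume 0 (2 * Real.pi) :=
    (continuous_const.mul ((Complex.continuous_conj.comp c2).mul ck)).intervalIntegrable _ _
  have heq : (∫ θ in (0:ℝ)..(2 * Real.pi), w θ * AlvK n θ)
      = ∫ θ in (0:ℝ)..(2 * Real.pi), (t1 θ + t2 θ + t3 θ + t4 θ) := by
    apply intervalIntegral.integral_congr
    intro θ _
    simp only [ht1, ht2, ht3, ht4]
    rw [hw θ]; ring
  rw [heq, intervalIntegral.integral_add ((i1.add i2).add i3) i4,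
    intervalIntegral.integral_add (i1.add i2) i3, intervalIntegral.integral_add i1 i2,
    ht1, ht2, ht3, ht4]
  rw [intervalIntegral.integral_const_mul, intervalIntegral.integral_const_mul,
    intervalIntegral.integral_const_mul, intervalIntegral.integral_const_mul]
  rw [Alv_conj_integral (fun θ => H1 ((ε:ℂ) * AlvE θ)) n,
    Alv_conj_integral (fun θ => H2 ((ε:ℂ) * AlvE θ)) n]
  rfl

lemma Alv_hasDerivAt_r {ε ε' : ℝ} (hε : 0 < ε) (hεε' : ε < ε') {φ F G : ℂ → ℂ}
    (hF : AnalyticOnNhd ℂ F (ball 0 ε')) (hG : AnalyticOnNhd ℂ G (ball 0 ε'))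
    (hφ : ∀ z ∈ ball (0:ℂ) ε', φ z = F z + (starRingEnd ℂ) (G z)) (θ : ℝ) :
    HasDerivAt (fun r : ℝ => φ ((r:ℂ) * AlvE θ))
      (deriv F ((ε:ℂ) * AlvE θ) * AlvE θ
        + (starRingEnd ℂ) (deriv G ((ε:ℂ) * AlvE θ) * AlvE θ)) ε := by
  have hz : (ε:ℂ) * AlvE θ ∈ ball (0:ℂ) ε' := AlvE_mem hε.le hεε' θ
  have inner : HasDerivAt (fun r : ℝ => (r:ℂ) * AlvE θ) (AlvE θ) ε := by
    have h1 : HasDerivAt (fun t : ℝ => (t:ℂ)) 1 ε := by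
      exact Complex.ofRealCLM.hasDerivAt (x := ε)
    simpa using h1.mul_const (AlvE θ)
  have hFd := ((hF _ hz).differentiableAt.hasDerivAt.hasFDerivAt.restrictScalars
    ℝ).comp_hasDerivAt ε inner
  have hGd := ((hG _ hz).differentiableAt.hasDerivAt.hasFDerivAt.restrictScalars
    ℝ).comp_hasDerivAt ε inner
  have hGc := Complex.conjCLE.hasFDerivAt.comp_hasDerivAt ε hGd
  have hsum := hFd.add hGc
  have hev : (fun r : ℝ => φ ((r:ℂ) * AlvE θ))
      =ᶠ[nhds ε] fun r : ℝ =>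
        (F ∘ fun r : ℝ => (r:ℂ) * AlvE θ) r
          + (⇑Complex.conjCLE ∘ (G ∘ fun r : ℝ => (r:ℂ) * AlvE θ)) r := by
    filter_upwards [Ioo_mem_nhds (by linarith : -ε' < ε) hεε'] with r hr
    have hmem : (r:ℂ) * AlvE θ ∈ ball (0:ℂ) ε' := by
      simp only [mem_ball, dist_zero_right, norm_mul, AlvE_abs,
        Complex.norm_real, Real.norm_eq_abs, mul_one]
      exact abs_lt.mpr ⟨hr.1, hr.2⟩
    simpa [Function.comp] using hφ _ hmem
  have := hsum.congr_of_eventuallyEq hev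
  convert this using 1
  · rfl
  simp [smul_eq_mul]
  ring

lemma Alv_hasDerivAt_t {ε ε' : ℝ} (hε : 0 < ε) (hεε' : ε < ε') {φ F G : ℂ → ℂ}
    (hF : AnalyticOnNhd ℂ F (ball 0 ε')) (hG : AnalyticOnNhd ℂ G (ball 0 ε'))
    (hφ : ∀ z ∈ ball (0:ℂ) ε', φ z = F z + (starRingEnd ℂ) (G z)) (θ : ℝ) :
    HasDerivAt (fun t : ℝ => φ ((ε:ℂ) * AlvE t))
      (Complex.I * (ε:ℂ) * (deriv F ((ε:ℂ) * AlvE θ) * AlvE θ)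
        - Complex.I * (ε:ℂ) * (starRingEnd ℂ) (deriv G ((ε:ℂ) * AlvE θ) * AlvE θ)) θ := by
  have hz : (ε:ℂ) * AlvE θ ∈ ball (0:ℂ) ε' := AlvE_mem hε.le hεε' θ
  have hFd := Alv_hasDerivAt_circ (ε := ε) (θ := θ) (hF _ hz).differentiableAt
  have hGd := Alv_hasDerivAt_circ (ε := ε) (θ := θ) (hG _ hz).differentiableAt
  have hGc := Complex.conjCLE.hasFDerivAt.comp_hasDerivAt θ hGd
  have hsum := hFd.add hGc
  have hev : (fun t : ℝ => φ ((ε:ℂ) * AlvE t))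
      =ᶠ[nhds θ] fun t : ℝ =>
        F ((ε:ℂ) * AlvE t) + (⇑Complex.conjCLE ∘ fun t : ℝ => G ((ε:ℂ) * AlvE t)) t := by
    apply Filter.Eventually.of_forall
    intro t
    simpa [Function.comp] using hφ _ (AlvE_mem hε.le hεε' t)
  have := hsum.congr_of_eventuallyEq hev
  convert this using 1
  · rfl
  simp [smul_eq_mul, map_mul, Complex.conj_I, Complex.conj_ofReal]
  ring

section Main

variable {ε ε' : ℝ} {φ F G : ℂ → ℂ}

lemma Alv_deriv_re_r (hε : 0 < ε) (hεε' : ε < ε')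
    (hF : AnalyticOnNhd ℂ F (ball 0 ε')) (hG : AnalyticOnNhd ℂ G (ball 0 ε'))
    (hφ : ∀ z ∈ ball (0:ℂ) ε', φ z = F z + (starRingEnd ℂ) (G z)) (θ : ℝ) :
    deriv (fun r : ℝ => (φ ((r:ℂ) * AlvE θ)).re) ε
      = (deriv F ((ε:ℂ) * AlvE θ) * AlvE θ
          + (starRingEnd ℂ) (deriv G ((ε:ℂ) * AlvE θ) * AlvE θ)).re := by
  have h := (Complex.reCLM.hasFDerivAt.comp_hasDerivAt ε
    (Alv_hasDerivAt_r hε hεε' hF hG hφ θ)).deriv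
  simpa [Function.comp_def] using h

lemma Alv_deriv_im_r (hε : 0 < ε) (hεε' : ε < ε')
    (hF : AnalyticOnNhd ℂ F (ball 0 ε')) (hG : AnalyticOnNhd ℂ G (ball 0 ε'))
    (hφ : ∀ z ∈ ball (0:ℂ) ε', φ z = F z + (starRingEnd ℂ) (G z)) (θ : ℝ) :
    deriv (fun r : ℝ => (φ ((r:ℂ) * AlvE θ)).im) ε
      = (deriv F ((ε:ℂ) * AlvE θ) * AlvE θ
          + (starRingEnd ℂ) (deriv G ((ε:ℂ) * AlvE θ) * AlvE θ)).im := by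
  have h := (Complex.imCLM.hasFDerivAt.comp_hasDerivAt ε
    (Alv_hasDerivAt_r hε hεε' hF hG hφ θ)).deriv
  simpa [Function.comp_def] using h

lemma Alv_deriv_re_t (hε : 0 < ε) (hεε' : ε < ε')
    (hF : AnalyticOnNhd ℂ F (ball 0 ε')) (hG : AnalyticOnNhd ℂ G (ball 0 ε'))
    (hφ : ∀ z ∈ ball (0:ℂ) ε', φ z = F z + (starRingEnd ℂ) (G z)) (θ : ℝ) :
    deriv (fun t : ℝ => (φ ((ε:ℂ) * AlvE t)).re) θ
      = (Complex.I * (ε:ℂ) * (deriv F ((ε:ℂ) * AlvE θ) * AlvE θ)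
          - Complex.I * (ε:ℂ) * (starRingEnd ℂ) (deriv G ((ε:ℂ) * AlvE θ) * AlvE θ)).re := by
  have h := (Complex.reCLM.hasFDerivAt.comp_hasDerivAt θ
    (Alv_hasDerivAt_t hε hεε' hF hG hφ θ)).deriv
  simpa [Function.comp_def] using h

lemma Alv_deriv_im_t (hε : 0 < ε) (hεε' : ε < ε')
    (hF : AnalyticOnNhd ℂ F (ball 0 ε')) (hG : AnalyticOnNhd ℂ G (ball 0 ε'))
    (hφ : ∀ z ∈ ball (0:ℂ) ε', φ z = F z + (starRingEnd ℂ) (G z)) (θ : ℝ) :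
    deriv (fun t : ℝ => (φ ((ε:ℂ) * AlvE t)).im) θ
      = (Complex.I * (ε:ℂ) * (deriv F ((ε:ℂ) * AlvE θ) * AlvE θ)
          - Complex.I * (ε:ℂ) * (starRingEnd ℂ) (deriv G ((ε:ℂ) * AlvE θ) * AlvE θ)).im := by
  have h := (Complex.imCLM.hasFDerivAt.comp_hasDerivAt θ
    (Alv_hasDerivAt_t hε hεε' hF hG hφ θ)).deriv
  simpa [Function.comp_def] using h

end Main



/-- On the disk `B_ε` with euclidean metric, trivial line bundle, metric and
framing, the Alvarez boundary operator `𝒜_{B_ε}` acts on Fourier modes by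
`𝒜(f,g)^(n) = [[0, −iσ(n)], [iσ(n), −ε/|n|]] (f̂(n), ĝ(n))ᵀ` for `n ≠ 0`, where `σ(n)` is
the sign of `n`.  Concretely: for any harmonic function `φ = u + iv` on a disk of radius
`ε' > ε` (i.e. `φ = F + conj G` with `F`, `G` analytic), the imaginary Alvarez boundary data
`f = v|_{r=ε}`, `g = (−∂_r u + ε⁻¹ ∂_θ v)|_{r=ε}` and the image data
`f' = (∂_r v + ε⁻¹ ∂_θ u)|_{r=ε}`, `g' = u|_{r=ε}` (the components of `J b'(Φ)`) have
Fourier coefficients satisfying the stated matrix relation. -/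
theorem stmt11 (ε ε' : ℝ) (hε : 0 < ε) (hεε' : ε < ε')
    (φ F G : ℂ → ℂ)
    (hF : AnalyticOnNhd ℂ F (Metric.ball 0 ε'))
    (hG : AnalyticOnNhd ℂ G (Metric.ball 0 ε'))
    (hφ : ∀ z ∈ Metric.ball (0 : ℂ) ε', φ z = F z + (starRingEnd ℂ) (G z))
    (f g f' g' : ℝ → ℝ)
    (hf : ∀ θ : ℝ, f θ = (φ ((ε : ℂ) * Complex.exp ((θ : ℂ) * Complex.I))).im)
    (hg : ∀ θ : ℝ, g θ =
      -(deriv (fun r : ℝ => (φ ((r : ℂ) * Complex.exp ((θ : ℂ) * Complex.I))).re) ε)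
      + (1 / ε) * deriv (fun t : ℝ => (φ ((ε : ℂ) * Complex.exp ((t : ℂ) * Complex.I))).im) θ)
    (hf' : ∀ θ : ℝ, f' θ =
      deriv (fun r : ℝ => (φ ((r : ℂ) * Complex.exp ((θ : ℂ) * Complex.I))).im) ε
      + (1 / ε) * deriv (fun t : ℝ => (φ ((ε : ℂ) * Complex.exp ((t : ℂ) * Complex.I))).re) θ)
    (hg' : ∀ θ : ℝ, g' θ = (φ ((ε : ℂ) * Complex.exp ((θ : ℂ) * Complex.I))).re)
    (fh gh fh' gh' : ℤ → ℂ)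
    (hfh : ∀ n : ℤ, fh n = (1 / (2 * (Real.pi : ℂ))) *
      ∫ θ in (0:ℝ)..(2 * Real.pi), (f θ : ℂ) * Complex.exp (-(n : ℂ) * (θ : ℂ) * Complex.I))
    (hgh : ∀ n : ℤ, gh n = (1 / (2 * (Real.pi : ℂ))) *
      ∫ θ in (0:ℝ)..(2 * Real.pi), (g θ : ℂ) * Complex.exp (-(n : ℂ) * (θ : ℂ) * Complex.I))
    (hfh' : ∀ n : ℤ, fh' n = (1 / (2 * (Real.pi : ℂ))) *
      ∫ θ in (0:ℝ)..(2 * Real.pi), (f' θ : ℂ) * Complex.exp (-(n : ℂ) * (θ : ℂ) * Complex.I))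
    (hgh' : ∀ n : ℤ, gh' n = (1 / (2 * (Real.pi : ℂ))) *
      ∫ θ in (0:ℝ)..(2 * Real.pi), (g' θ : ℂ) * Complex.exp (-(n : ℂ) * (θ : ℂ) * Complex.I)) :
    ∀ n : ℤ, n ≠ 0 →
      fh' n = -Complex.I * (if 0 < n then 1 else -1) * gh n ∧
      gh' n = Complex.I * (if 0 < n then 1 else -1) * fh n
        - ((ε / (n.natAbs : ℝ) : ℝ) : ℂ) * gh n := by
  intro n hn
  have hεC : (ε : ℂ) ≠ 0 := by exact_mod_cast hε.ne'
  set Gd : ℂ → ℂ := fun z => (ε:ℂ)⁻¹ * (deriv G z * z) with hGdDef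
  have hGdA : AnalyticOnNhd ℂ Gd (Metric.ball 0 ε') :=
    analyticOnNhd_const.mul (hG.deriv.mul analyticOnNhd_id)
  have hGdpt : ∀ θ : ℝ, Gd ((ε:ℂ) * AlvE θ) = deriv G ((ε:ℂ) * AlvE θ) * AlvE θ := by
    intro θ
    simp only [hGdDef]
    field_simp
  have hK : ∀ (m : ℤ) (θ : ℝ), Complex.exp (-(m : ℂ) * (θ : ℂ) * Complex.I) = AlvK m θ :=
    fun _ _ => rfl
  have hE : ∀ t : ℝ, Complex.exp ((t : ℂ) * Complex.I) = AlvE t := fun _ => rfl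
  have hCGd : ∀ m : ℤ, AlvC ε Gd m = AlvC ε (deriv G) (m - 1) := by
    intro m
    rw [AlvC, AlvC]
    apply intervalIntegral.integral_congr
    intro θ _
    simp only
    rw [hGdpt θ, ← AlvK_shift m θ]
    ring
  have hparts : ∀ m : ℤ, (m : ℂ) * AlvC ε G m = (ε : ℂ) * AlvC ε Gd m := by
    intro m
    rw [hCGd m]
    exact AlvC_parts hε hεε' hG m
  -- pointwise formulas
  have hfw : ∀ θ : ℝ, ((f θ : ℝ) : ℂ)
      = (-Complex.I/2) * F ((ε:ℂ) * AlvE θ)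
        + (Complex.I/2) * (starRingEnd ℂ) (F ((ε:ℂ) * AlvE θ))
        + (Complex.I/2) * G ((ε:ℂ) * AlvE θ)
        + (-Complex.I/2) * (starRingEnd ℂ) (G ((ε:ℂ) * AlvE θ)) := by
    intro θ
    rw [hf θ, hE θ, hφ _ (AlvE_mem hε.le hεε' θ), Alv_imC]
    simp only [map_add, Complex.conj_conj]
    ring
  have hg'w : ∀ θ : ℝ, ((g' θ : ℝ) : ℂ)
      = (1/2 : ℂ) * F ((ε:ℂ) * AlvE θ)
        + (1/2 : ℂ) * (starRingEnd ℂ) (F ((ε:ℂ) * AlvE θ))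
        + (1/2 : ℂ) * G ((ε:ℂ) * AlvE θ)
        + (1/2 : ℂ) * (starRingEnd ℂ) (G ((ε:ℂ) * AlvE θ)) := by
    intro θ
    rw [hg' θ, hE θ, hφ _ (AlvE_mem hε.le hεε' θ), Alv_reC]
    simp only [map_add, Complex.conj_conj]
    ring
  have hgw : ∀ θ : ℝ, ((g θ : ℝ) : ℂ)
      = (-1 : ℂ) * Gd ((ε:ℂ) * AlvE θ)
        + (-1 : ℂ) * (starRingEnd ℂ) (Gd ((ε:ℂ) * AlvE θ))
        + (0 : ℂ) * F ((ε:ℂ) * AlvE θ)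
        + (0 : ℂ) * (starRingEnd ℂ) (F ((ε:ℂ) * AlvE θ)) := by
    intro θ
    rw [hg θ]
    simp only [hE]
    rw [Alv_deriv_re_r hε hεε' hF hG hφ θ, Alv_deriv_im_t hε hεε' hF hG hφ θ]
    rw [hGdpt θ]
    push_cast
    rw [Alv_reC, Alv_imC]
    simp only [map_add, map_sub, map_mul, Complex.conj_conj, Complex.conj_I,
      Complex.conj_ofReal]
    field_simp
    ring_nf
    all_goals simp only [Complex.I_sq]
    all_goals ring
  have hf'w : ∀ θ : ℝ, ((f' θ : ℝ) : ℂ)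
      = (Complex.I) * Gd ((ε:ℂ) * AlvE θ)
        + (-Complex.I) * (starRingEnd ℂ) (Gd ((ε:ℂ) * AlvE θ))
        + (0 : ℂ) * F ((ε:ℂ) * AlvE θ)
        + (0 : ℂ) * (starRingEnd ℂ) (F ((ε:ℂ) * AlvE θ)) := by
    intro θ
    rw [hf' θ]
    simp only [hE]
    rw [Alv_deriv_im_r hε hεε' hF hG hφ θ, Alv_deriv_re_t hε hεε' hF hG hφ θ]
    rw [hGdpt θ]
    push_cast
    rw [Alv_reC, Alv_imC]
    simp only [map_add, map_sub, map_mul, Complex.conj_conj, Complex.conj_I,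
      Complex.conj_ofReal]
    field_simp
    ring_nf
    all_goals simp only [Complex.I_sq]
    all_goals ring
  -- coefficient formulas
  have Hf : fh n = (1 / (2 * (Real.pi : ℂ))) *
      ((-Complex.I/2) * AlvC ε F n + (Complex.I/2) * (starRingEnd ℂ) (AlvC ε F (-n))
        + (Complex.I/2) * AlvC ε G n + (-Complex.I/2) * (starRingEnd ℂ) (AlvC ε G (-n))) := by
    rw [hfh n]
    simp only [hK]
    rw [Alv_master hε.le hεε' hF hG _ _ _ _ n _ hfw]
  have Hg' : gh' n = (1 / (2 * (Real.pi : ℂ))) *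
      ((1/2 : ℂ) * AlvC ε F n + (1/2 : ℂ) * (starRingEnd ℂ) (AlvC ε F (-n))
        + (1/2 : ℂ) * AlvC ε G n + (1/2 : ℂ) * (starRingEnd ℂ) (AlvC ε G (-n))) := by
    rw [hgh' n]
    simp only [hK]
    rw [Alv_master hε.le hεε' hF hG _ _ _ _ n _ hg'w]
  have Hg : gh n = (1 / (2 * (Real.pi : ℂ))) *
      ((-1 : ℂ) * AlvC ε Gd n + (-1 : ℂ) * (starRingEnd ℂ) (AlvC ε Gd (-n))
        + (0 : ℂ) * AlvC ε F n + (0 : ℂ) * (starRingEnd ℂ) (AlvC ε F (-n))) := by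
    rw [hgh n]
    simp only [hK]
    rw [Alv_master hε.le hεε' hGdA hF _ _ _ _ n _ hgw]
  have Hf' : fh' n = (1 / (2 * (Real.pi : ℂ))) *
      ((Complex.I) * AlvC ε Gd n + (-Complex.I) * (starRingEnd ℂ) (AlvC ε Gd (-n))
        + (0 : ℂ) * AlvC ε F n + (0 : ℂ) * (starRingEnd ℂ) (AlvC ε F (-n))) := by
    rw [hfh' n]
    simp only [hK]
    rw [Alv_master hε.le hεε' hGdA hF _ _ _ _ n _ hf'w]
  rcases lt_or_gt_of_ne hn with hneg | hpos
  · -- n < 0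
    have h0 : ¬ (0 < n) := by omega
    simp only [h0, if_false]
    have hCF : AlvC ε F n = 0 := AlvC_zero hε hεε' hF hneg
    have hCG : AlvC ε G n = 0 := AlvC_zero hε hεε' hG hneg
    have hCGd0 : AlvC ε Gd n = 0 := AlvC_zero hε hεε' hGdA hneg
    have hnC : (n : ℂ) ≠ 0 := by exact_mod_cast hn
    have hrabs : ((n.natAbs : ℝ)) = -(n : ℝ) := by
      rw [Nat.cast_natAbs]
      exact_mod_cast abs_of_neg hneg
    have hpc : (-(n : ℂ)) * (starRingEnd ℂ) (AlvC ε G (-n))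
        = (ε : ℂ) * (starRingEnd ℂ) (AlvC ε Gd (-n)) := by
      have h2 := congrArg (starRingEnd ℂ) (hparts (-n))
      simpa [map_mul, Complex.conj_ofReal] using h2
    have hGn' : (starRingEnd ℂ) (AlvC ε G (-n))
        = ((ε:ℂ) / (-(n:ℂ))) * (starRingEnd ℂ) (AlvC ε Gd (-n)) := by
      rw [div_mul_eq_mul_div, eq_div_iff (neg_ne_zero.mpr hnC)]
      linear_combination hpc
    have hcast : ((ε / (n.natAbs : ℝ) : ℝ) : ℂ) = (ε:ℂ) / (-(n:ℂ)) := by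
      rw [hrabs]
      push_cast
      ring
    constructor
    · rw [Hf', Hg, hCGd0]
      ring
    · rw [Hg', Hf, Hg, hCF, hCG, hCGd0, hGn', hcast]
      linear_combination ((1/(2*(Real.pi:ℂ)))/2 * (starRingEnd ℂ) (AlvC ε F (-n))
        - (ε:ℂ)/(-(n:ℂ)) * ((1/(2*(Real.pi:ℂ)))/2) * (starRingEnd ℂ) (AlvC ε Gd (-n)))
          * Complex.I_sq
  · -- n > 0
    simp only [hpos, if_true]
    have hCF' : AlvC ε F (-n) = 0 := AlvC_zero hε hεε' hF (by omega)
    have hCG' : AlvC ε G (-n) = 0 := AlvC_zero hε hεε' hG (by omega)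
    have hCGd' : AlvC ε Gd (-n) = 0 := AlvC_zero hε hεε' hGdA (by omega)
    have hnC : (n : ℂ) ≠ 0 := by exact_mod_cast hn
    have hrabs : ((n.natAbs : ℝ)) = (n : ℝ) := by
      rw [Nat.cast_natAbs]
      exact_mod_cast abs_of_pos hpos
    have hGn : AlvC ε G n = ((ε:ℂ) / (n:ℂ)) * AlvC ε Gd n := by
      rw [div_mul_eq_mul_div, eq_div_iff hnC]
      linear_combination hparts n
    have hcast : ((ε / (n.natAbs : ℝ) : ℝ) : ℂ) = (ε:ℂ) / (n:ℂ) := by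
      rw [hrabs]
      push_cast
      ring
    constructor
    · rw [Hf', Hg, hCGd']
      simp only [map_zero]
      ring
    · rw [Hg', Hf, Hg, hCF', hCG', hCGd', hGn, hcast]
      simp only [map_zero]
      linear_combination ((1/(2*(Real.pi:ℂ)))/2 * AlvC ε F n
        - (ε:ℂ)/(n:ℂ) * ((1/(2*(Real.pi:ℂ)))/2) * AlvC ε Gd n) * Complex.I_sq
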